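/- In the SFBF setup with uniformly bounded oracle variance, i.e. sup_{x∈ℝ^d} E[‖F(x,ξ) − T(x)‖²]^{1/2} ≤ σ̂, for every solution x* ∈ 𝒳_* and every n ≥ 0, P-almost surely E[‖X_{n+1} − x*‖² | F_n] ≤ ‖X_n − x*‖² − (ρ_n/2)·r_{α_n}(X_n)² + κ_n σ̂²/m_{n+1}, where ρ_n = 1 − 2L²α_n², κ_n = α_n² C₂² (8 + ρ_n), and C₂ is the constant for which the conditional oracle bounds E[‖W_{n+1}‖²|F_n]^{1/2} ≤ C₂σ̂/√(m_{n+1}) and E[‖Z_{n+1}‖²|F̂_n]^{1/2} ≤ C₂σ̂/√(m_{n+1}) hold almost surely. -/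

import Mathlib

open MeasureTheory
open scoped RealInnerProductSpace


section AuxLemmas

variable {E : Type*} [NormedAddCommGroup E] [InnerProductSpace ℝ E]

private lemma sqf_proj_nonexp {𝒳 : Set E} (proj : E → E)
    (hmem : ∀ x, proj x ∈ 𝒳)
    (hchar : ∀ x, ∀ y ∈ 𝒳, ⟪x - proj x, y - proj x⟫ ≤ 0) :
    ∀ x y, ‖proj x - proj y‖ ≤ ‖x - y‖ := by
  intro x y
  have h1 := hchar x (proj y) (hmem y)
  have h2 := hchar y (proj x) (hmem x)
  have key : ‖proj x - proj y‖ ^ 2 ≤ ⟪x - y, proj x - proj y⟫ := by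
    have e1 : ⟪x - proj x, proj y - proj x⟫ + ⟪y - proj y, proj x - proj y⟫
        = ⟪x - y, proj y - proj x⟫ + ‖proj x - proj y‖ ^ 2 := by
      simp only [inner_sub_left, inner_sub_right, ← real_inner_self_eq_norm_sq]
      rw [real_inner_comm (proj y) x, real_inner_comm (proj y) (proj x),
        real_inner_comm (proj x) y]
      ring
    have e2 : ⟪x - y, proj y - proj x⟫ = - ⟪x - y, proj x - proj y⟫ := by
      rw [← inner_neg_right]; congr 1; abel
    nlinarith [add_nonpos h1 h2]
  have h3 := real_inner_le_norm (x - y) (proj x - proj y)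
  rcases eq_or_lt_of_le (norm_nonneg (proj x - proj y)) with h | h
  · rw [← h]; exact norm_nonneg _
  · nlinarith

private lemma sqf_eq_proj_of_char {𝒳 : Set E} (proj : E → E)
    (hmem : ∀ x, proj x ∈ 𝒳)
    (hchar : ∀ x, ∀ y ∈ 𝒳, ⟪x - proj x, y - proj x⟫ ≤ 0)
    (w z : E) (hz : z ∈ 𝒳) (hzchar : ∀ y ∈ 𝒳, ⟪w - z, y - z⟫ ≤ 0) :
    proj w = z := by
  have h1 := hzchar (proj w) (hmem w)
  have h2 := hchar w z hz
  have key : ‖proj w - z‖ ^ 2 ≤ 0 := by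
    have e1 : ⟪w - z, proj w - z⟫ + ⟪w - proj w, z - proj w⟫ = ‖proj w - z‖ ^ 2 := by
      simp only [inner_sub_left, inner_sub_right, ← real_inner_self_eq_norm_sq]
      rw [real_inner_comm z w, real_inner_comm z (proj w), real_inner_comm (proj w) w]
      ring
    linarith [add_nonpos h1 h2]
  have : ‖proj w - z‖ = 0 := by nlinarith [norm_nonneg (proj w - z)]
  rwa [norm_sub_eq_zero_iff] at this

private lemma sqf_pointwise_key (αn L : ℝ) (hα : 0 < αn) (hρ : 0 ≤ 1 - 2 * L ^ 2 * αn ^ 2)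
    (hL : 0 ≤ L) (x y xs a b tx ty p : E)
    (hchar : ⟪(x - αn • a) - y, xs - y⟫ ≤ 0)
    (hpm : 0 ≤ ⟪ty, y - xs⟫)
    (hlip : ‖tx - ty‖ ≤ L * ‖x - y‖)
    (hr : ‖x - p‖ ≤ ‖x - y‖ + αn * ‖a - tx‖) :
    ‖(y + αn • (a - b)) - xs‖ ^ 2 ≤ ‖x - xs‖ ^ 2
      - ((1 - 2 * L ^ 2 * αn ^ 2) / 2) * ‖x - p‖ ^ 2
      + (4 + (1 - 2 * L ^ 2 * αn ^ 2)) * αn ^ 2 * ‖a - tx‖ ^ 2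
      + 4 * αn ^ 2 * ‖b - ty‖ ^ 2
      + 2 * αn * ⟪b - ty, xs - y⟫ := by
  set ρ := 1 - 2 * L ^ 2 * αn ^ 2 with hρdef
  have E1 : ‖(y + αn • (a - b)) - xs‖ ^ 2
      = ‖y - xs‖ ^ 2 + 2 * αn * ⟪a - b, y - xs⟫ + αn ^ 2 * ‖a - b‖ ^ 2 := by
    have : (y + αn • (a - b)) - xs = (y - xs) + αn • (a - b) := by abel
    rw [this, @norm_add_sq_real, real_inner_smul_right, real_inner_comm, norm_smul]
    simp [abs_of_pos hα]
    ring
  have E2 : ‖x - xs‖ ^ 2 = ‖x - y‖ ^ 2 + 2 * ⟪x - y, y - xs⟫ + ‖y - xs‖ ^ 2 := by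
    have : x - xs = (x - y) + (y - xs) := by abel
    rw [this, @norm_add_sq_real]
  have E3 : ⟪x - y, xs - y⟫ - αn * ⟪a, xs - y⟫ ≤ 0 := by
    have : (x - αn • a) - y = (x - y) - αn • a := by abel
    rw [this, inner_sub_left, real_inner_smul_left] at hchar
    linarith
  have E4 : ‖a - b‖ ^ 2 ≤ 2 * L ^ 2 * ‖x - y‖ ^ 2 + 4 * ‖a - tx‖ ^ 2 + 4 * ‖b - ty‖ ^ 2 := by
    have h1 : a - b = (tx - ty) + ((a - tx) - (b - ty)) := by abel
    have h2 : ‖a - b‖ ≤ ‖tx - ty‖ + ‖(a - tx) - (b - ty)‖ := by rw [h1]; exact norm_add_le _ _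
    have h3 : ‖(a - tx) - (b - ty)‖ ≤ ‖a - tx‖ + ‖b - ty‖ := norm_sub_le _ _
    nlinarith [norm_nonneg (a - b), norm_nonneg (tx - ty), norm_nonneg ((a - tx) - (b - ty)),
      norm_nonneg (a - tx), norm_nonneg (b - ty), norm_nonneg (x - y),
      sq_nonneg (‖a - tx‖ - ‖b - ty‖), sq_nonneg (‖tx - ty‖ - ‖(a - tx) - (b - ty)‖),
      mul_le_mul_of_nonneg_left hlip hL]
  have E5 : ‖x - p‖ ^ 2 ≤ 2 * ‖x - y‖ ^ 2 + 2 * αn ^ 2 * ‖a - tx‖ ^ 2 := by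
    nlinarith [norm_nonneg (x - p), norm_nonneg (x - y), norm_nonneg (a - tx),
      sq_nonneg (‖x - y‖ - αn * ‖a - tx‖)]
  have I1 : ⟪a - b, y - xs⟫ = ⟪a, y - xs⟫ - ⟪b, y - xs⟫ := inner_sub_left _ _ _
  have I2 : ⟪a, xs - y⟫ = - ⟪a, y - xs⟫ := by rw [← inner_neg_right]; congr 1; abel
  have I3 : ⟪b, y - xs⟫ = ⟪ty, y - xs⟫ + ⟪b - ty, y - xs⟫ := by
    rw [← inner_add_left]; congr 1; abel
  have I4 : ⟪b - ty, xs - y⟫ = - ⟪b - ty, y - xs⟫ := by rw [← inner_neg_right]; congr 1; abel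
  have I5 : ⟪x - y, xs - y⟫ = - ⟪x - y, y - xs⟫ := by rw [← inner_neg_right]; congr 1; abel
  have K1 : αn * ⟪a - b, y - xs⟫
      = αn * ⟪a, y - xs⟫ - αn * ⟪ty, y - xs⟫ - αn * ⟪b - ty, y - xs⟫ := by
    rw [I1, I3]; ring
  have K2 : αn * ⟪a, xs - y⟫ = -(αn * ⟪a, y - xs⟫) := by rw [I2]; ring
  have K4 : αn * ⟪b - ty, xs - y⟫ = -(αn * ⟪b - ty, y - xs⟫) := by rw [I4]; ring
  have H4 : αn ^ 2 * ‖a - b‖ ^ 2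
      ≤ αn ^ 2 * (2 * L ^ 2 * ‖x - y‖ ^ 2 + 4 * ‖a - tx‖ ^ 2 + 4 * ‖b - ty‖ ^ 2) :=
    mul_le_mul_of_nonneg_left E4 (sq_nonneg αn)
  have H5 : (ρ / 2) * ‖x - p‖ ^ 2
      ≤ (ρ / 2) * (2 * ‖x - y‖ ^ 2 + 2 * αn ^ 2 * ‖a - tx‖ ^ 2) :=
    mul_le_mul_of_nonneg_left E5 (by linarith)
  have H6 : 0 ≤ αn * ⟪ty, y - xs⟫ := mul_nonneg hα.le hpm
  have H7 : 2 * ⟪x - y, xs - y⟫ - 2 * (αn * ⟪a, xs - y⟫) ≤ 0 := by linarith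
  linarith [E1, E2, K1, K2, K4, H4, H5, H6, H7, I5]

end AuxLemmas

private lemma sqf_condExp_clm_comp {Ω : Type*} {m m0 : MeasurableSpace Ω} (hm : m ≤ m0)
    {μ : Measure Ω} [IsFiniteMeasure μ] {E F : Type*}
    [NormedAddCommGroup E] [NormedSpace ℝ E] [CompleteSpace E]
    [NormedAddCommGroup F] [NormedSpace ℝ F] [CompleteSpace F]
    (L : E →L[ℝ] F) {f : Ω → E} (hf : Integrable f μ) :
    (fun ω => L (condExp m μ f ω)) =ᵐ[μ] condExp m μ (fun ω => L (f ω)) := by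
  refine ae_eq_condExp_of_forall_setIntegral_eq hm (L.integrable_comp hf)
    (fun s _ _ => (L.integrable_comp integrable_condExp).integrableOn)
    (fun s hs hμs => ?_)
    (StronglyMeasurable.aestronglyMeasurable
      (L.continuous.comp_stronglyMeasurable stronglyMeasurable_condExp))
  rw [L.integral_comp_comm integrable_condExp.integrableOn,
    L.integral_comp_comm hf.integrableOn, setIntegral_condExp hm hf hs]

private lemma sqf_coord_abs_le_norm {d : ℕ} (x : EuclideanSpace ℝ (Fin d)) (i : Fin d) :
    |x i| ≤ ‖x‖ := by
  rw [EuclideanSpace.norm_eq, ← Real.sqrt_sq_eq_abs]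
  refine Real.sqrt_le_sqrt ?_
  have : ∀ j ∈ Finset.univ, (0:ℝ) ≤ ‖x j‖ ^ 2 := fun j _ => sq_nonneg _
  have h := Finset.single_le_sum this (Finset.mem_univ i)
  simpa [Real.norm_eq_abs, sq_abs] using h

private lemma sqf_sq_le_of_rpow_le {x c : ℝ} (hx : 0 ≤ x) (hc : 0 ≤ c)
    (h : x ^ ((1:ℝ)/2) ≤ c) : x ≤ c ^ 2 := by
  rw [← Real.sqrt_eq_rpow] at h
  calc x = Real.sqrt x ^ 2 := (Real.sq_sqrt hx).symm
    _ ≤ c ^ 2 := by nlinarith [Real.sqrt_nonneg x]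

set_option maxHeartbeats 3000000 in
/-- The stochastic quasi-Fejér inequality for the SFBF iterates under uniformly bounded
oracle variance: `E[‖X_{n+1} − x*‖² | F_n] ≤ ‖X_n − x*‖² − (ρ_n/2)r_{α_n}(X_n)²
  + κ_n σ̂²/m_{n+1}` a.s., with `κ_n = α_n² C₂² (8 + ρ_n)`. -/
theorem stmt_11 {d : ℕ} {Ω Ξ : Type*} [mΩ : MeasurableSpace Ω] [mΞ : MeasurableSpace Ξ]
    (μ : Measure Ω) [IsProbabilityMeasure μ]
    (P : Measure Ξ) [IsProbabilityMeasure P]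
    (𝒳 : Set (EuclideanSpace ℝ (Fin d)))
    (h𝒳ne : 𝒳.Nonempty) (h𝒳cl : IsClosed 𝒳) (h𝒳cv : Convex ℝ 𝒳)
    (proj : EuclideanSpace ℝ (Fin d) → EuclideanSpace ℝ (Fin d))
    (hproj_mem : ∀ x, proj x ∈ 𝒳)
    (hproj_char : ∀ x, ∀ y ∈ 𝒳, ⟪x - proj x, y - proj x⟫ ≤ 0)
    (F : EuclideanSpace ℝ (Fin d) → Ξ → EuclideanSpace ℝ (Fin d))
    (hFmeas : ∀ x, Measurable (F x))
    (T : EuclideanSpace ℝ (Fin d) → EuclideanSpace ℝ (Fin d))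
    (hT : ∀ x, T x = ∫ z, F x z ∂P)
    (hTint : ∀ x, Integrable (fun z => F x z) P)
    (L : ℝ) (hL : 0 < L)
    (hLip : ∀ x y, ‖T x - T y‖ ≤ L * ‖x - y‖)
    (hpm : ∀ x y, 0 ≤ ⟪T x, y - x⟫ → 0 ≤ ⟪T y, y - x⟫)
    (xs : EuclideanSpace ℝ (Fin d)) (hxs_mem : xs ∈ 𝒳)
    (hxs_sol : ∀ y ∈ 𝒳, 0 ≤ ⟪T xs, y - xs⟫)
    -- uniformly bounded oracle variance
    (σhat : ℝ) (hσhat : 0 ≤ σhat)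
    (hUBV : ∀ x, (∫ z, ‖F x z - T x‖ ^ 2 ∂P) ^ ((1 : ℝ) / 2) ≤ σhat)
    -- step sizes and batch sizes
    (α : ℕ → ℝ) (hα : ∀ n, 0 < α n) (hαL : ∀ n, Real.sqrt 2 * L * α n < 1)
    (mb : ℕ → ℕ) (hmb : ∀ n, 1 ≤ mb n)
    -- filtrations and adapted processes
    (𝓕 𝓕hat : ℕ → MeasurableSpace Ω)
    (h𝓕le : ∀ n, 𝓕 n ≤ 𝓕hat n) (h𝓕hatle : ∀ n, 𝓕hat n ≤ 𝓕 (n + 1))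
    (h𝓕Ω : ∀ n, 𝓕hat n ≤ mΩ)
    (X Y A B : ℕ → Ω → EuclideanSpace ℝ (Fin d))
    (hXad : ∀ n, StronglyMeasurable[𝓕 n] (X n))
    (hAad : ∀ n, StronglyMeasurable[𝓕hat n] (A n))
    (hYad : ∀ n, StronglyMeasurable[𝓕hat n] (Y n))
    (hBad : ∀ n, StronglyMeasurable[𝓕 (n + 1)] (B n))
    -- the SFBF recursion
    (hY : ∀ n ω, Y n ω = proj (X n ω - α n • A n ω))
    (hX : ∀ n ω, X (n + 1) ω = Y n ω + α n • (A n ω - B n ω))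
    -- integrability
    (hXint : ∀ n, Integrable (fun ω => ‖X n ω - xs‖ ^ 2) μ)
    (hWint : ∀ n, Integrable (fun ω => ‖A n ω - T (X n ω)‖ ^ 2) μ)
    (hZint : ∀ n, Integrable (fun ω => ‖B n ω - T (Y n ω)‖ ^ 2) μ)
    (hAint : ∀ n, Integrable (A n) μ) (hBint : ∀ n, Integrable (B n) μ)
    (hTXint : ∀ n, Integrable (fun ω => T (X n ω)) μ)
    (hTYint : ∀ n, Integrable (fun ω => T (Y n ω)) μ)
    -- the oracle errors have zero conditional mean
    (hW0 : ∀ n, condExp (𝓕 n) μ (fun ω => A n ω - T (X n ω)) =ᵐ[μ] 0)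
    (hZ0 : ∀ n, condExp (𝓕hat n) μ (fun ω => B n ω - T (Y n ω)) =ᵐ[μ] 0)
    -- the conditional second-moment oracle bounds, with constant `C₂`
    (C₂ : ℝ) (hC₂ : 0 < C₂)
    (hWbd : ∀ n, ∀ᵐ ω ∂μ,
      (condExp (𝓕 n) μ (fun ω' => ‖A n ω' - T (X n ω')‖ ^ 2) ω) ^ ((1 : ℝ) / 2)
        ≤ C₂ * σhat / Real.sqrt (mb (n + 1)))
    (hZbd : ∀ n, ∀ᵐ ω ∂μ,
      (condExp (𝓕hat n) μ (fun ω' => ‖B n ω' - T (Y n ω')‖ ^ 2) ω) ^ ((1 : ℝ) / 2)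
        ≤ C₂ * σhat / Real.sqrt (mb (n + 1))) :
    ∀ n, ∀ᵐ ω ∂μ,
      condExp (𝓕 n) μ (fun ω' => ‖X (n + 1) ω' - xs‖ ^ 2) ω
        ≤ ‖X n ω - xs‖ ^ 2
          - ((1 - 2 * L ^ 2 * (α n) ^ 2) / 2) *
              ‖X n ω - proj (X n ω - α n • T (X n ω))‖ ^ 2
          + ((α n) ^ 2 * C₂ ^ 2 * (8 + (1 - 2 * L ^ 2 * (α n) ^ 2)) * σhat ^ 2)
              / (mb (n + 1)) := by
  intro n
  have hm : 𝓕 n ≤ mΩ := (h𝓕le n).trans (h𝓕Ω n)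
  have hmhat : 𝓕hat n ≤ mΩ := h𝓕Ω n
  have hL0 : 0 ≤ L := hL.le
  have hαn : 0 < α n := hα n
  have hρ0 : 0 ≤ 1 - 2 * L ^ 2 * α n ^ 2 := by
    have h1 := hαL n
    have h2 : (0:ℝ) ≤ Real.sqrt 2 * L * α n := by positivity
    have h3 : (Real.sqrt 2 * L * α n) ^ 2 < 1 := by nlinarith
    have h4 : Real.sqrt 2 ^ 2 = 2 := Real.sq_sqrt (by norm_num)
    nlinarith
  have nonexp := sqf_proj_nonexp proj hproj_mem hproj_char
  have contProj : Continuous proj := by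
    refine (LipschitzWith.of_dist_le_mul (K := 1) fun x y => ?_).continuous
    rw [dist_eq_norm, dist_eq_norm]; simpa using nonexp x y
  have contT : Continuous T := by
    refine (LipschitzWith.of_dist_le_mul (K := L.toNNReal) fun x y => ?_).continuous
    rw [dist_eq_norm, dist_eq_norm, Real.coe_toNNReal L hL0]; exact hLip x y
  have hfix : proj (xs - α n • T xs) = xs := by
    refine sqf_eq_proj_of_char proj hproj_mem hproj_char _ xs hxs_mem fun y hy => ?_
    have he : (xs - α n • T xs) - xs = -(α n • T xs) := by abel
    rw [he, inner_neg_left, real_inner_smul_left]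
    exact neg_nonpos.2 (mul_nonneg hαn.le (hxs_sol y hy))
  -- constants
  have hmpos : (0:ℝ) < (mb (n+1) : ℝ) := by
    exact_mod_cast Nat.lt_of_lt_of_le Nat.zero_lt_one (hmb (n+1))
  have cst0 : 0 ≤ C₂ * σhat / Real.sqrt (mb (n+1)) := by positivity
  have cstsq : (C₂ * σhat / Real.sqrt (mb (n+1))) ^ 2
      = C₂ ^ 2 * σhat ^ 2 / (mb (n+1) : ℝ) := by
    rw [div_pow, mul_pow, Real.sq_sqrt hmpos.le]
  -- measurability over μ
  have aesmX : AEStronglyMeasurable (X n) μ := ((hXad n).mono hm).aestronglyMeasurable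
  have aesmY : AEStronglyMeasurable (Y n) μ := ((hYad n).mono hmhat).aestronglyMeasurable
  have aesmB : AEStronglyMeasurable (B n) μ :=
    ((hBad n).mono ((h𝓕le (n+1)).trans (h𝓕Ω (n+1)))).aestronglyMeasurable
  have aesmTY : AEStronglyMeasurable (fun ω => T (Y n ω)) μ :=
    contT.comp_aestronglyMeasurable aesmY
  have aesmZv : AEStronglyMeasurable (fun ω => B n ω - T (Y n ω)) μ := aesmB.sub aesmTY
  -- residual bound
  have rbd : ∀ ω, ‖X n ω - proj (X n ω - α n • T (X n ω))‖ ≤ (2 + α n * L) * ‖X n ω - xs‖ := by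
    intro ω
    have h1 : ‖X n ω - proj (X n ω - α n • T (X n ω))‖
        ≤ ‖X n ω - xs‖ + ‖xs - proj (X n ω - α n • T (X n ω))‖ := by
      have he : X n ω - proj (X n ω - α n • T (X n ω))
          = (X n ω - xs) + (xs - proj (X n ω - α n • T (X n ω))) := by abel
      rw [he]; exact norm_add_le _ _
    have h2 : ‖xs - proj (X n ω - α n • T (X n ω))‖
        ≤ ‖(xs - α n • T xs) - (X n ω - α n • T (X n ω))‖ := by
      conv_lhs => rw [← hfix]
      exact nonexp _ _
    have h3 : ‖(xs - α n • T xs) - (X n ω - α n • T (X n ω))‖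
        ≤ ‖X n ω - xs‖ + α n * ‖T (X n ω) - T xs‖ := by
      have he : (xs - α n • T xs) - (X n ω - α n • T (X n ω))
          = (xs - X n ω) + α n • (T (X n ω) - T xs) := by
        rw [smul_sub]; abel
      rw [he]
      refine (norm_add_le _ _).trans ?_
      rw [norm_smul, Real.norm_eq_abs, abs_of_pos hαn, norm_sub_rev]
    have h4 := hLip (X n ω) xs
    nlinarith [mul_le_mul_of_nonneg_left h4 hαn.le]
  have Ir : Integrable (fun ω => ‖X n ω - proj (X n ω - α n • T (X n ω))‖ ^ 2) μ := by
    refine Integrable.mono' ((hXint n).const_mul ((2 + α n * L) ^ 2)) ?_ ?_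
    · have contR : Continuous fun v : EuclideanSpace ℝ (Fin d) =>
          ‖v - proj (v - α n • T v)‖ ^ 2 :=
        ((continuous_id.sub (contProj.comp
          (continuous_id.sub (contT.const_smul (α n))))).norm.pow 2)
      exact contR.comp_aestronglyMeasurable aesmX
    · refine ae_of_all μ fun ω => ?_
      rw [Real.norm_eq_abs, abs_of_nonneg (by positivity)]
      have hsq := mul_self_le_mul_self
        (norm_nonneg (X n ω - proj (X n ω - α n • T (X n ω)))) (rbd ω)
      linarith [hsq]
  -- bound on ‖Y - xs‖
  have ybd : ∀ ω, ‖Y n ω - xs‖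
      ≤ (1 + α n * L) * ‖X n ω - xs‖ + α n * ‖A n ω - T (X n ω)‖ := by
    intro ω
    rw [hY n ω]
    have h2 : ‖proj (X n ω - α n • A n ω) - xs‖
        ≤ ‖(X n ω - α n • A n ω) - (xs - α n • T xs)‖ := by
      conv_lhs => rw [← hfix]
      exact nonexp _ _
    have h3 : ‖(X n ω - α n • A n ω) - (xs - α n • T xs)‖
        ≤ ‖X n ω - xs‖ + α n * ‖A n ω - T xs‖ := by
      have he : (X n ω - α n • A n ω) - (xs - α n • T xs)
          = (X n ω - xs) + α n • (T xs - A n ω) := by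
        rw [smul_sub]; abel
      rw [he]
      refine (norm_add_le _ _).trans ?_
      rw [norm_smul, Real.norm_eq_abs, abs_of_pos hαn, norm_sub_rev (T xs)]
    have h4 : ‖A n ω - T xs‖ ≤ ‖A n ω - T (X n ω)‖ + ‖T (X n ω) - T xs‖ := by
      have he : A n ω - T xs = (A n ω - T (X n ω)) + (T (X n ω) - T xs) := by abel
      rw [he]; exact norm_add_le _ _
    have h5 := hLip (X n ω) xs
    nlinarith [mul_le_mul_of_nonneg_left h4 hαn.le, mul_le_mul_of_nonneg_left h5 hαn.le]
  have Iy2 : Integrable (fun ω => ‖Y n ω - xs‖ ^ 2) μ := by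
    refine Integrable.mono'
      (((hXint n).const_mul (2 * (1 + α n * L) ^ 2)).add
        ((hWint n).const_mul (2 * α n ^ 2))) ?_ ?_
    · exact (continuous_pow 2).comp_aestronglyMeasurable
        (aesmY.sub aestronglyMeasurable_const).norm
    · refine ae_of_all μ fun ω => ?_
      rw [Real.norm_eq_abs, abs_of_nonneg (by positivity)]
      have h := ybd ω
      have hsq := mul_self_le_mul_self (norm_nonneg (Y n ω - xs)) h
      simp only [Pi.add_apply]
      linarith [hsq,
        sq_nonneg ((1 + α n * L) * ‖X n ω - xs‖ - α n * ‖A n ω - T (X n ω)‖)]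
  -- the inner product term
  have Iip : Integrable (fun ω => (⟪B n ω - T (Y n ω), xs - Y n ω⟫ : ℝ)) μ := by
    refine Integrable.mono'
      (((hZint n).const_mul (1/2)).add (Iy2.const_mul (1/2))) ?_ ?_
    · exact AEStronglyMeasurable.inner aesmZv (aestronglyMeasurable_const.sub aesmY)
    · refine ae_of_all μ fun ω => ?_
      rw [Real.norm_eq_abs]
      have h1 := abs_real_inner_le_norm (B n ω - T (Y n ω)) (xs - Y n ω)
      rw [norm_sub_rev xs] at h1
      simp only [Pi.add_apply]
      linarith [sq_nonneg (‖B n ω - T (Y n ω)‖ - ‖Y n ω - xs‖)]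
  -- component-wise facts for the zero-mean inner product term
  have IZf : Integrable (fun ω => B n ω - T (Y n ω)) μ := (hBint n).sub (hTYint n)
  have hcoordz : ∀ i : Fin d,
      condExp (𝓕hat n) μ (fun ω => (B n ω - T (Y n ω)) i) =ᵐ[μ] fun _ => (0:ℝ) := by
    intro i
    have h0 : (fun ω => (EuclideanSpace.proj (𝕜 := ℝ) i) (B n ω - T (Y n ω)))
        = (fun ω => (B n ω - T (Y n ω)) i) := rfl
    have h := sqf_condExp_clm_comp hmhat (EuclideanSpace.proj (𝕜 := ℝ) i) IZf
    rw [h0] at h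
    refine h.symm.trans ?_
    filter_upwards [hZ0 n] with ω h2
    simp [h2]
  have hcoY : ∀ i : Fin d, StronglyMeasurable[𝓕hat n] (fun ω => (xs - Y n ω) i) := by
    intro i
    exact (EuclideanSpace.proj (𝕜 := ℝ) i).continuous.comp_stronglyMeasurable
      (stronglyMeasurable_const.sub (hYad n))
  have Izco : ∀ i : Fin d, Integrable (fun ω => (B n ω - T (Y n ω)) i) μ := fun i =>
    (EuclideanSpace.proj (𝕜 := ℝ) i).integrable_comp IZf
  have Iprod : ∀ i : Fin d,
      Integrable ((fun ω => (xs - Y n ω) i) * fun ω => (B n ω - T (Y n ω)) i) μ := by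
    intro i
    refine Integrable.mono' ((Iy2.const_mul (1/2)).add ((hZint n).const_mul (1/2))) ?_ ?_
    · exact (((hcoY i).mono hmhat).aestronglyMeasurable).mul (Izco i).aestronglyMeasurable
    · refine ae_of_all μ fun ω => ?_
      simp only [Pi.mul_apply, Pi.add_apply]
      rw [Real.norm_eq_abs, abs_mul]
      have h1 := sqf_coord_abs_le_norm (xs - Y n ω) i
      have h2 := sqf_coord_abs_le_norm (B n ω - T (Y n ω)) i
      rw [norm_sub_rev xs] at h1
      have h3 : |(xs - Y n ω) i| * |(B n ω - T (Y n ω)) i|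
          ≤ ‖Y n ω - xs‖ * ‖B n ω - T (Y n ω)‖ :=
        mul_le_mul h1 h2 (abs_nonneg _) (norm_nonneg _)
      linarith [sq_nonneg (‖Y n ω - xs‖ - ‖B n ω - T (Y n ω)‖)]
  have hmulz : ∀ i : Fin d,
      condExp (𝓕hat n) μ ((fun ω => (xs - Y n ω) i) * fun ω => (B n ω - T (Y n ω)) i)
        =ᵐ[μ] fun _ => (0:ℝ) := by
    intro i
    refine (condExp_mul_of_stronglyMeasurable_left (hcoY i) (Iprod i) (Izco i)).trans ?_
    filter_upwards [hcoordz i] with ω h2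
    simp only [Pi.mul_apply]
    rw [h2]
    simp
  have hipsum : (fun ω => (⟪B n ω - T (Y n ω), xs - Y n ω⟫ : ℝ))
      = ∑ i : Fin d, ((fun ω => (xs - Y n ω) i) * fun ω => (B n ω - T (Y n ω)) i) := by
    funext ω
    rw [Finset.sum_apply]
    simp only [Pi.mul_apply]
    rw [PiLp.inner_apply]
    exact Finset.sum_congr rfl fun i _ => by simp [RCLike.inner_apply]
  have ipHat : condExp (𝓕hat n) μ (fun ω => (⟪B n ω - T (Y n ω), xs - Y n ω⟫ : ℝ))
      =ᵐ[μ] fun _ => (0:ℝ) := by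
    rw [hipsum]
    refine (condExp_finset_sum (fun i _ => Iprod i) (𝓕hat n)).trans ?_
    have hall : ∀ᵐ ω ∂μ, ∀ i : Fin d,
        condExp (𝓕hat n) μ ((fun ω => (xs - Y n ω) i) * fun ω => (B n ω - T (Y n ω)) i) ω
          = 0 := by
      rw [ae_all_iff]
      intro i
      filter_upwards [hmulz i] with ω h; exact h
    filter_upwards [hall] with ω h
    rw [Finset.sum_apply]
    exact Finset.sum_eq_zero fun i _ => h i
  have ipF : condExp (𝓕 n) μ (fun ω => (⟪B n ω - T (Y n ω), xs - Y n ω⟫ : ℝ))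
      =ᵐ[μ] fun _ => (0:ℝ) := by
    refine (condExp_condExp_of_le (h𝓕le n) (h𝓕Ω n)).symm.trans ?_
    refine (condExp_congr_ae ipHat).trans ?_
    rw [condExp_const hm (0:ℝ)]
  -- conditional variance bounds
  have bW : ∀ᵐ ω ∂μ,
      condExp (𝓕 n) μ (fun ω' => ‖A n ω' - T (X n ω')‖ ^ 2) ω
        ≤ C₂ ^ 2 * σhat ^ 2 / (mb (n+1) : ℝ) := by
    have hnn : 0 ≤ᵐ[μ] condExp (𝓕 n) μ (fun ω' => ‖A n ω' - T (X n ω')‖ ^ 2) :=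
      condExp_nonneg (ae_of_all μ fun ω => by positivity)
    filter_upwards [hWbd n, hnn] with ω h1 h2
    exact le_trans (sqf_sq_le_of_rpow_le (by simpa using h2) cst0 h1) (le_of_eq cstsq)
  have bZhat : condExp (𝓕hat n) μ (fun ω' => ‖B n ω' - T (Y n ω')‖ ^ 2)
      ≤ᵐ[μ] fun _ => C₂ ^ 2 * σhat ^ 2 / (mb (n+1) : ℝ) := by
    have hnn : 0 ≤ᵐ[μ] condExp (𝓕hat n) μ (fun ω' => ‖B n ω' - T (Y n ω')‖ ^ 2) :=
      condExp_nonneg (ae_of_all μ fun ω => by positivity)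
    filter_upwards [hZbd n, hnn] with ω h1 h2
    exact le_trans (sqf_sq_le_of_rpow_le (by simpa using h2) cst0 h1) (le_of_eq cstsq)
  have bZ : ∀ᵐ ω ∂μ,
      condExp (𝓕 n) μ (fun ω' => ‖B n ω' - T (Y n ω')‖ ^ 2) ω
        ≤ C₂ ^ 2 * σhat ^ 2 / (mb (n+1) : ℝ) := by
    have tz := (condExp_condExp_of_le (μ := μ) (h𝓕le n) (h𝓕Ω n)
      (f := fun ω' => ‖B n ω' - T (Y n ω')‖ ^ 2)).symm
    have hmono2 := condExp_mono (μ := μ) (m := 𝓕 n) integrable_condExp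
      (integrable_const _) bZhat
    have hc := condExp_const (μ := μ) hm (C₂ ^ 2 * σhat ^ 2 / (mb (n+1) : ℝ))
    filter_upwards [tz, hmono2] with ω h1 h2
    rw [h1]
    refine h2.trans ?_
    rw [hc]
  -- abbreviations
  set g0 : Ω → ℝ := fun ω => ‖X n ω - xs‖ ^ 2
      - (1 - 2 * L ^ 2 * α n ^ 2) / 2 * ‖X n ω - proj (X n ω - α n • T (X n ω))‖ ^ 2
    with hg0
  set w2 : Ω → ℝ := fun ω => ‖A n ω - T (X n ω)‖ ^ 2 with hw2
  set z2 : Ω → ℝ := fun ω => ‖B n ω - T (Y n ω)‖ ^ 2 with hz2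
  set ipf : Ω → ℝ := fun ω => (⟪B n ω - T (Y n ω), xs - Y n ω⟫ : ℝ) with hipf
  set c1 : ℝ := (4 + (1 - 2 * L ^ 2 * α n ^ 2)) * α n ^ 2 with hc1
  set c2 : ℝ := 4 * α n ^ 2 with hc2
  set c3 : ℝ := 2 * α n with hc3
  have Iw2 : Integrable w2 μ := hWint n
  have Iz2 : Integrable z2 μ := hZint n
  have Iip2 : Integrable ipf μ := Iip
  have Ig0 : Integrable g0 μ := (hXint n).sub (Ir.const_mul _)
  have smg0 : StronglyMeasurable[𝓕 n] g0 := by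
    have contG : Continuous fun v : EuclideanSpace ℝ (Fin d) =>
        ‖v - xs‖ ^ 2 - (1 - 2 * L ^ 2 * α n ^ 2) / 2 * ‖v - proj (v - α n • T v)‖ ^ 2 :=
      (((continuous_id.sub continuous_const).norm.pow 2).sub
        (continuous_const.mul ((continuous_id.sub (contProj.comp
          (continuous_id.sub (contT.const_smul (α n))))).norm.pow 2)))
    exact contG.comp_stronglyMeasurable (hXad n)
  have e0 : condExp (𝓕 n) μ g0 = g0 := condExp_of_stronglyMeasurable hm smg0 Ig0
  -- pointwise inequality
  have hpt : (fun ω => ‖X (n+1) ω - xs‖ ^ 2)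
      ≤ᵐ[μ] (g0 + c1 • w2 + c2 • z2 + c3 • ipf) := by
    refine ae_of_all μ fun ω => ?_
    simp only [hg0, hw2, hz2, hipf, hc1, hc2, hc3, Pi.add_apply, Pi.smul_apply, smul_eq_mul]
    rw [hX n ω]
    have hYmem : Y n ω ∈ 𝒳 := by rw [hY n ω]; exact hproj_mem _
    have hchar : ⟪(X n ω - α n • A n ω) - Y n ω, xs - Y n ω⟫ ≤ 0 := by
      rw [hY n ω]; exact hproj_char _ xs hxs_mem
    have hpm' : 0 ≤ ⟪T (Y n ω), Y n ω - xs⟫ := hpm xs (Y n ω) (hxs_sol _ hYmem)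
    have hr' : ‖X n ω - proj (X n ω - α n • T (X n ω))‖
        ≤ ‖X n ω - Y n ω‖ + α n * ‖A n ω - T (X n ω)‖ := by
      have t1 : ‖X n ω - proj (X n ω - α n • T (X n ω))‖
          ≤ ‖X n ω - Y n ω‖ + ‖Y n ω - proj (X n ω - α n • T (X n ω))‖ := by
        have he : X n ω - proj (X n ω - α n • T (X n ω))
            = (X n ω - Y n ω) + (Y n ω - proj (X n ω - α n • T (X n ω))) := by abel
        rw [he]; exact norm_add_le _ _
      have t2 : ‖Y n ω - proj (X n ω - α n • T (X n ω))‖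
          ≤ α n * ‖A n ω - T (X n ω)‖ := by
        rw [hY n ω]
        refine (nonexp _ _).trans ?_
        have he : (X n ω - α n • A n ω) - (X n ω - α n • T (X n ω))
            = α n • (T (X n ω) - A n ω) := by rw [smul_sub]; abel
        rw [he, norm_smul, Real.norm_eq_abs, abs_of_pos hαn, norm_sub_rev]
      linarith
    have key := sqf_pointwise_key (α n) L hαn hρ0 hL0 (X n ω) (Y n ω) xs (A n ω) (B n ω)
      (T (X n ω)) (T (Y n ω)) (proj (X n ω - α n • T (X n ω))) hchar hpm' (hLip _ _) hr'
    linarith [key]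
  have IRHS : Integrable (g0 + c1 • w2 + c2 • z2 + c3 • ipf) μ :=
    ((Ig0.add (Integrable.smul c1 Iw2)).add (Integrable.smul c2 Iz2)).add
      (Integrable.smul c3 Iip2)
  have hmono : condExp (𝓕 n) μ (fun ω => ‖X (n+1) ω - xs‖ ^ 2)
      ≤ᵐ[μ] condExp (𝓕 n) μ (g0 + c1 • w2 + c2 • z2 + c3 • ipf) :=
    condExp_mono (hXint (n+1)) IRHS hpt
  have ce1 : condExp (𝓕 n) μ (g0 + c1 • w2 + c2 • z2 + c3 • ipf)
      =ᵐ[μ] condExp (𝓕 n) μ (g0 + c1 • w2 + c2 • z2) + condExp (𝓕 n) μ (c3 • ipf) :=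
    condExp_add ((Ig0.add (Integrable.smul c1 Iw2)).add (Integrable.smul c2 Iz2))
      (Integrable.smul c3 Iip2) (𝓕 n)
  have ce2 : condExp (𝓕 n) μ (g0 + c1 • w2 + c2 • z2)
      =ᵐ[μ] condExp (𝓕 n) μ (g0 + c1 • w2) + condExp (𝓕 n) μ (c2 • z2) :=
    condExp_add (Ig0.add (Integrable.smul c1 Iw2)) (Integrable.smul c2 Iz2) (𝓕 n)
  have ce3 : condExp (𝓕 n) μ (g0 + c1 • w2)
      =ᵐ[μ] condExp (𝓕 n) μ g0 + condExp (𝓕 n) μ (c1 • w2) :=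
    condExp_add Ig0 (Integrable.smul c1 Iw2) (𝓕 n)
  have cs1 : condExp (𝓕 n) μ (c1 • w2) =ᵐ[μ] c1 • condExp (𝓕 n) μ w2 :=
    condExp_smul c1 w2 (𝓕 n)
  have cs2 : condExp (𝓕 n) μ (c2 • z2) =ᵐ[μ] c2 • condExp (𝓕 n) μ z2 :=
    condExp_smul c2 z2 (𝓕 n)
  have cs3 : condExp (𝓕 n) μ (c3 • ipf) =ᵐ[μ] c3 • condExp (𝓕 n) μ ipf :=
    condExp_smul c3 ipf (𝓕 n)
  -- final combination
  have hc1nn : 0 ≤ c1 := by rw [hc1]; nlinarith [hρ0, sq_nonneg (α n)]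
  have hc2nn : 0 ≤ c2 := by rw [hc2]; positivity
  filter_upwards [hmono, ce1, ce2, ce3, cs1, cs2, cs3, bW, bZ, ipF]
    with ω h0 h1 h2 h3 hs1 hs2 hs3 hbw hbz hip0
  simp only [Pi.add_apply, Pi.smul_apply, smul_eq_mul] at h1 h2 h3 hs1 hs2 hs3
  have he0 : condExp (𝓕 n) μ g0 ω = g0 ω := congrFun e0 ω
  have hg0ω : g0 ω = ‖X n ω - xs‖ ^ 2
      - (1 - 2 * L ^ 2 * α n ^ 2) / 2 * ‖X n ω - proj (X n ω - α n • T (X n ω))‖ ^ 2 := by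
    rw [hg0]
  have m1 : c1 * condExp (𝓕 n) μ w2 ω ≤ c1 * (C₂ ^ 2 * σhat ^ 2 / (mb (n+1) : ℝ)) :=
    mul_le_mul_of_nonneg_left hbw hc1nn
  have m2 : c2 * condExp (𝓕 n) μ z2 ω ≤ c2 * (C₂ ^ 2 * σhat ^ 2 / (mb (n+1) : ℝ)) :=
    mul_le_mul_of_nonneg_left hbz hc2nn
  have hip0' : condExp (𝓕 n) μ ipf ω = 0 := hip0
  have hfin : c1 * (C₂ ^ 2 * σhat ^ 2 / (mb (n+1) : ℝ))
      + c2 * (C₂ ^ 2 * σhat ^ 2 / (mb (n+1) : ℝ))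
      = (α n ^ 2 * C₂ ^ 2 * (8 + (1 - 2 * L ^ 2 * α n ^ 2)) * σhat ^ 2) / (mb (n+1) : ℝ) := by
    rw [hc1, hc2]; ring
  rw [h1, h2, h3, hs1, hs2, hs3, he0, hg0ω, hip0', mul_zero, add_zero] at h0
  linarith [h0, m1, m2, hfin]
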